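/- A simplicial complex over a finite set I with |I| ≥ 2 generates the language Ev_I of binary strings with an even number of 1's if and only if it is connected. Consequently, the minimal complexes generating Ev_I are exactly the spanning trees of I. -/

import Mathlib

/-- `W` determines output coordinate `i` of `f`: the value `f x i` only
depends on the restriction of `x` to `W`. -/
def Determines {B J A I : Type*} (f : (J → B) → (I → A)) (i : I) (W : Set J) : Prop :=
  ∀ x y : J → B, (∀ j ∈ W, x j = y j) → f x i = f y i

/-- The input window of output coordinate `i`: the intersection of all
determining sets (which, for finite data, is the smallest determining set). -/
def window {B J A I : Type*} (f : (J → B) → (I → A)) (i : I) : Set J :=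
  ⋂₀ {W : Set J | Determines f i W}

/-- The dual window of an input coordinate `j`. -/
def dualWindow {B J A I : Type*} (f : (J → B) → (I → A)) (j : J) : Set I :=
  {i : I | j ∈ window f i}

/-- The communication complex of `f`: `S ∈ K_f` iff `⋂_{i ∈ S} W_f(i) ≠ ∅`
(the empty intersection being all of `J`). -/
def commComplex {B J A I : Type*} (f : (J → B) → (I → A)) : Set (Set I) :=
  {S : Set I | (⋂ i ∈ S, window f i).Nonempty}

/-- A complex `K` over `I` generates the language `L ⊆ A^I` if some function
`f : B^J → A^I` (with `B, J` finite, `J` nonempty) has image `L` and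
communication complex contained in `K`. -/
def Generates {A I : Type*} (K : Set (Set I)) (L : Set (I → A)) : Prop :=
  ∃ (B J : Type) (_ : Finite B) (_ : Finite J) (_ : Nonempty J)
    (f : (J → B) → (I → A)), Set.range f = L ∧ commComplex f ⊆ K

/-- A complex is connected if no nontrivial partition of the vertex set splits
all of its simplices. -/
def ConnectedComplex {I : Type*} (K : Set (Set I)) : Prop :=
  ¬ ∃ I0 : Set I, I0 ≠ ∅ ∧ I0 ≠ Set.univ ∧ ∀ S ∈ K, S ⊆ I0 ∨ S ⊆ I0ᶜ

/-- A simplicial complex: a downward closed collection of subsets. -/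
def IsComplex {I : Type*} (K : Set (Set I)) : Prop :=
  ∀ S ∈ K, ∀ T ⊆ S, T ∈ K

/-- The 1-skeleton of a complex, as a simple graph. -/
def skeletonGraph {I : Type*} (K : Set (Set I)) : SimpleGraph I :=
  SimpleGraph.fromRel (fun i j => ({i, j} : Set I) ∈ K)

/-- The complex associated to a graph: the empty set, the singletons, and the
edges. -/
def treeComplex {I : Type*} (G : SimpleGraph I) : Set (Set I) :=
  {S | S = ∅ ∨ (∃ i, S = {i}) ∨ ∃ i j, G.Adj i j ∧ S = ({i, j} : Set I)}

/-- The maximal simplices of a complex. -/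
def maxSimplices {I : Type*} (K : Set (Set I)) : Set (Set I) :=
  {S | S ∈ K ∧ ∀ T ∈ K, S ⊆ T → S = T}

/-- The image `f_*(K)` of a complex `K` on the input coordinates of `f`:
generated by the unions of dual windows over simplices of `K`. -/
def pushComplex {B J A I : Type*} (f : (J → B) → (I → A)) (K : Set (Set J)) : Set (Set I) :=
  {T : Set I | ∃ S ∈ K, T ⊆ ⋃ j ∈ S, dualWindow f j}


/-- The language of binary strings with an even number of `1`s. -/
def EvLang (I : Type) [Fintype I] [DecidableEq I] : Set (I → Bool) :=
  {x | Even (Finset.univ.filter (fun i => x i = true)).card}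

lemma determines_inter {B J A I : Type*} {f : (J → B) → (I → A)} {i : I} {W1 W2 : Set J}
    (h1 : Determines f i W1) (h2 : Determines f i W2) : Determines f i (W1 ∩ W2) := by
  classical
  intro x y hxy
  set z : J → B := fun j => if j ∈ W1 then x j else y j with hz
  have hx : f x i = f z i := h1 x z (fun j hj => by simp [hz, hj])
  have hy : f z i = f y i := h2 z y (fun j hj => by
    by_cases h : j ∈ W1
    · simp [hz, h, hxy j ⟨h, hj⟩]
    · simp [hz, h])
  rw [hx, hy]

lemma determines_univ {B J A I : Type*} (f : (J → B) → (I → A)) (i : I) :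
    Determines f i Set.univ := by
  intro x y hxy
  have : x = y := funext fun j => hxy j trivial
  rw [this]

lemma determines_window {B J A I : Type*} [Finite J] (f : (J → B) → (I → A)) (i : I) :
    Determines f i (window f i) := by
  have key : ∀ C : Set (Set J), C.Finite → (∀ W ∈ C, Determines f i W) →
      Determines f i (⋂₀ C) := by
    intro C hC
    refine Set.Finite.induction_on
      (motive := fun C _ => (∀ W ∈ C, Determines f i W) → Determines f i (⋂₀ C)) C hC ?_ ?_
    · intro _; rw [Set.sInter_empty]; exact determines_univ f i
    · intro W C _ _ ih h
      rw [Set.sInter_insert]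
      exact determines_inter (h _ (Set.mem_insert _ _))
        (ih fun W hW => h W (Set.mem_insert_of_mem _ hW))
  exact key _ (Set.toFinite _) (fun W hW => hW)

lemma window_subset {B J A I : Type*} {f : (J → B) → (I → A)} {i : I} {W : Set J}
    (h : Determines f i W) : window f i ⊆ W :=
  Set.sInter_subset_of_mem h

section Ev
variable {I : Type} [Fintype I] [DecidableEq I]

lemma zero_mem_ev : (fun _ => false) ∈ EvLang I := by
  simp [EvLang]

lemma pair_mem_ev {a b : I} (hab : a ≠ b) :
    (fun i => decide (i = a ∨ i = b)) ∈ EvLang I := by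
  have h : (Finset.univ.filter (fun i => (decide (i = a ∨ i = b)) = true)) = {a, b} := by
    ext i; simp
  simp only [EvLang, Set.mem_setOf_eq, h]
  rw [Finset.card_insert_of_notMem (by simp [hab]), Finset.card_singleton]
  exact ⟨1, rfl⟩

lemma single_not_mem_ev (a : I) : (fun i => decide (i = a)) ∉ EvLang I := by
  have h : (Finset.univ.filter (fun i => (decide (i = a)) = true)) = {a} := by
    ext i; simp
  intro hmem
  simp only [EvLang, Set.mem_setOf_eq, h, Finset.card_singleton] at hmem
  exact Nat.not_even_one hmem

lemma gen_to_conn (h2 : 2 ≤ Fintype.card I) {K : Set (Set I)}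
    (hgen : Generates K (EvLang I)) : ConnectedComplex K := by
  classical
  rintro ⟨I0, hne, hnu, hsplit⟩
  obtain ⟨B, J, hB, hJ, hJne, f, hrange, hcomm⟩ := hgen
  have hdisj : ∀ i0 ∈ I0, ∀ i1 ∉ I0, ∀ j, j ∈ window f i0 → j ∈ window f i1 → False := by
    intro i0 h0 i1 h1 j hj0 hj1
    have hmem : ({i0, i1} : Set I) ∈ commComplex f := by
      simp only [commComplex, Set.mem_setOf_eq]
      refine ⟨j, ?_⟩
      simp only [Set.mem_iInter]
      intro i hi
      rcases hi with rfl | hi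
      · exact hj0
      · rcases hi with rfl; exact hj1
    rcases hsplit _ (hcomm hmem) with h | h
    · exact h1 (h (by simp))
    · exact (h (by simp) : i0 ∈ I0ᶜ) h0
  obtain ⟨k, hk⟩ := Set.nonempty_iff_ne_empty.2 hne
  obtain ⟨i1, hi1⟩ : ∃ i, i ∉ I0 := by
    by_contra h
    push_neg at h
    exact hnu (Set.eq_univ_of_forall h)
  have hki1 : i1 ≠ k := fun h => hi1 (h ▸ hk)
  obtain ⟨x, hx⟩ : (fun _ => false) ∈ Set.range f := hrange ▸ zero_mem_ev
  obtain ⟨y, hy⟩ : (fun i => decide (i = i1 ∨ i = k)) ∈ Set.range f :=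
    hrange ▸ pair_mem_ev hki1
  set z : J → B := fun j => if ∃ i, i ∉ I0 ∧ j ∈ window f i then y j else x j with hz
  have hz1 : ∀ i ∉ I0, f z i = f y i := by
    intro i hi
    refine determines_window f i z y (fun j hj => ?_)
    have hcond : ∃ i', i' ∉ I0 ∧ j ∈ window f i' := ⟨i, hi, hj⟩
    show (if ∃ i, i ∉ I0 ∧ j ∈ window f i then y j else x j) = y j
    rw [if_pos hcond]
  have hz0 : ∀ i ∈ I0, f z i = f x i := by
    intro i hi
    refine determines_window f i z x (fun j hj => ?_)
    have hcond : ¬ ∃ i', i' ∉ I0 ∧ j ∈ window f i' := by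
      rintro ⟨i', hi', hj'⟩
      exact hdisj i hi i' hi' j hj hj'
    show (if ∃ i, i ∉ I0 ∧ j ∈ window f i then y j else x j) = x j
    rw [if_neg hcond]
  have hfz : f z = fun i => decide (i = i1) := by
    funext i
    by_cases hi : i ∈ I0
    · rw [hz0 i hi, hx]
      have : i ≠ i1 := fun h => hi1 (h ▸ hi)
      simp [this]
    · rw [hz1 i hi, hy]
      have : i ≠ k := fun h => hi (h ▸ hk)
      simp [this]
  exact single_not_mem_ev i1 (hrange ▸ ⟨z, hfz⟩)

end Ev

section Conn
variable {I : Type} [Fintype I] [DecidableEq I]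

lemma exists_edge (h2 : 2 ≤ Fintype.card I) {K : Set (Set I)} (hK : IsComplex K)
    (hc : ConnectedComplex K) (i : I) : ∃ b, b ≠ i ∧ ({i, b} : Set I) ∈ K := by
  by_contra h
  push_neg at h
  obtain ⟨b, hb⟩ := Fintype.exists_ne_of_one_lt_card (by omega) i
  refine hc ⟨{i}, by simp, ?_, ?_⟩
  · intro hu
    have hbmem : b ∈ ({i} : Set I) := hu ▸ Set.mem_univ b
    exact hb (by simpa using hbmem)
  · intro S hS
    by_cases hi : i ∈ S
    · left
      intro c hc'
      by_contra hci
      have : ({i, c} : Set I) ∈ K := hK S hS _ (by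
        intro t ht
        rcases ht with rfl | ht
        · exact hi
        · rcases ht with rfl; exact hc')
      exact h c (by simpa using hci) this
    · right
      intro c hc'
      simp only [Set.mem_compl_iff, Set.mem_singleton_iff]
      rintro rfl
      exact hi hc'

lemma reach_of_conn {K : Set (Set I)} (hK : IsComplex K) (hc : ConnectedComplex K)
    (a b : I) :
    Relation.ReflTransGen (fun x y => x ≠ y ∧ ({x, y} : Set I) ∈ K) a b := by
  by_contra hb
  set R := fun x y : I => x ≠ y ∧ ({x, y} : Set I) ∈ K with hR
  set I0 := {c : I | Relation.ReflTransGen R a c} with hI0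
  refine hc ⟨I0, ?_, ?_, ?_⟩
  · exact Set.nonempty_iff_ne_empty.1 ⟨a, Relation.ReflTransGen.refl⟩
  · intro hu
    exact hb (hu ▸ Set.mem_univ b : b ∈ I0)
  · intro S hS
    by_cases hy : ∃ y ∈ S, y ∉ I0
    · right
      obtain ⟨y, hyS, hyI⟩ := hy
      intro x hxS
      simp only [Set.mem_compl_iff]
      intro hxI
      have hxy : x ≠ y := fun h => hyI (h ▸ hxI)
      have : ({x, y} : Set I) ∈ K := hK S hS _ (by
        intro t ht
        rcases ht with rfl | ht
        · exact hxS
        · rcases ht with rfl; exact hyS)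
      exact hyI (Relation.ReflTransGen.tail hxI ⟨hxy, this⟩)
    · left
      push_neg at hy
      exact hy

end Conn

section Construction
variable {I : Type} [Fintype I] [DecidableEq I]

/-- The type of oriented edges of the 1-skeleton of `K`. -/
abbrev EdgeT (K : Set (Set I)) : Type :=
  {p : I × I // p.1 ≠ p.2 ∧ ({p.1, p.2} : Set I) ∈ K}

noncomputable instance (K : Set (Set I)) : Fintype (EdgeT K) := Fintype.ofFinite _

/-- endpoint weight -/
def wt {K : Set (Set I)} (j : EdgeT K) (i : I) : ZMod 2 :=
  if i = j.1.1 ∨ i = j.1.2 then 1 else 0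

/-- The `ZMod 2`-incidence map. -/
noncomputable def GZ (K : Set (Set I)) (y : EdgeT K → ZMod 2) (i : I) : ZMod 2 :=
  ∑ j : EdgeT K, y j * wt j i

lemma GZ_add (K : Set (Set I)) (y z : EdgeT K → ZMod 2) :
    GZ K (y + z) = GZ K y + GZ K z := by
  funext i
  simp [GZ, add_mul, Finset.sum_add_distrib]

lemma GZ_zero (K : Set (Set I)) : GZ K 0 = 0 := by
  funext i; simp [GZ]

lemma zmod2_cases (c : ZMod 2) : c = 0 ∨ c = 1 := by revert c; decide

lemma zmod2_add_self (c : ZMod 2) : c + c = 0 := by revert c; decide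

lemma sum_wt {K : Set (Set I)} (j : EdgeT K) : ∑ i : I, wt j i = 0 := by
  have h : ∀ i : I, wt j i = if i ∈ ({j.1.1, j.1.2} : Finset I) then (1 : ZMod 2) else 0 := by
    intro i; simp [wt, Finset.mem_insert, Finset.mem_singleton]
  simp only [h]
  rw [Finset.sum_ite_mem, Finset.univ_inter, Finset.sum_const,
    Finset.card_insert_of_notMem (by simp [j.2.1]), Finset.card_singleton]
  decide

lemma GZ_total (K : Set (Set I)) (y : EdgeT K → ZMod 2) : ∑ i : I, GZ K y i = 0 := by
  simp only [GZ]
  rw [Finset.sum_comm]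
  simp only [← Finset.mul_sum, sum_wt, mul_zero, Finset.sum_const_zero]

/-- the vector e_a + e_b over ZMod 2 -/
def eab (a b : I) : I → ZMod 2 :=
  fun i => (if i = a then 1 else 0) + (if i = b then 1 else 0)

lemma eab_comm (a b : I) : eab a b = eab b a := by
  funext i; simp [eab, add_comm]

lemma eab_trans (a b c : I) : eab a c = eab a b + eab b c := by
  funext i
  simp only [eab, Pi.add_apply]
  have key : ∀ x y z : ZMod 2, x + z = (x + y) + (y + z) := by decide
  exact key _ _ _

lemma eab_self (a : I) : eab a a = 0 := by
  funext i; simp only [eab]; rw [zmod2_add_self]; rfl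

lemma eab_mem_range {K : Set (Set I)} {a b : I} (hab : a ≠ b) (hK : ({a, b} : Set I) ∈ K) :
    eab a b ∈ Set.range (GZ K) := by
  classical
  refine ⟨fun j => if j = (⟨(a, b), hab, hK⟩ : EdgeT K) then 1 else 0, ?_⟩
  funext i
  rw [GZ]
  rw [Finset.sum_eq_single (⟨(a, b), hab, hK⟩ : EdgeT K)]
  · simp only [if_pos rfl, one_mul, wt]
    by_cases hia : i = a
    · subst hia
      simp [eab, hab, if_neg (fun h : i = b => hab h)]
    · by_cases hib : i = b
      · subst hib
        simp [eab, hia]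
      · simp [eab, hia, hib]
  · intro c _ hne
    rw [if_neg hne, zero_mul]
  · intro h
    exact absurd (Finset.mem_univ _) h

lemma eab_mem_of_reach {K : Set (Set I)} {a b : I}
    (h : Relation.ReflTransGen (fun x y => x ≠ y ∧ ({x, y} : Set I) ∈ K) a b) :
    eab a b ∈ Set.range (GZ K) := by
  induction h with
  | refl => exact ⟨0, by rw [GZ_zero, eab_self]⟩
  | tail _ hstep ih =>
    obtain ⟨y1, hy1⟩ := ih
    obtain ⟨y2, hy2⟩ := eab_mem_range hstep.1 hstep.2
    exact ⟨y1 + y2, by rw [GZ_add, hy1, hy2, ← eab_trans]⟩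

lemma even_mem_range {K : Set (Set I)} (hK : IsComplex K) (hc : ConnectedComplex K)
    (v : I → ZMod 2) (hv : ∑ i, v i = 0) : v ∈ Set.range (GZ K) := by
  classical
  obtain ⟨n, hn⟩ : ∃ n, (Finset.univ.filter (fun i => v i ≠ 0)).card = n := ⟨_, rfl⟩
  induction n using Nat.strong_induction_on generalizing v with
  | _ n ih =>
    have hsum : ∑ i, v i = ((Finset.univ.filter (fun i => v i ≠ 0)).card : ZMod 2) := by
      rw [← Finset.sum_filter_ne_zero]
      rw [Finset.sum_congr rfl (fun i hi => ?_), Finset.sum_const, nsmul_eq_mul, mul_one]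
      rcases zmod2_cases (v i) with h | h
      · exact absurd h (Finset.mem_filter.1 hi).2
      · exact h
    rcases Nat.eq_zero_or_pos n with rfl | hpos
    · have : ∀ i, v i = 0 := by
        intro i
        by_contra h
        have : i ∈ Finset.univ.filter (fun i => v i ≠ 0) := Finset.mem_filter.2 ⟨Finset.mem_univ _, h⟩
        rw [Finset.card_eq_zero] at hn
        simp [hn] at this
      exact ⟨0, by rw [GZ_zero]; funext i; exact (this i).symm⟩
    · -- card is even, so ≥ 2
      have hcast : ((n : ZMod 2)) = 0 := by rw [← hn, ← hsum, hv]
      have hdvd : 2 ∣ n := by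
        rwa [ZMod.natCast_eq_zero_iff] at hcast
      have h2n : 2 ≤ n := by omega
      have hlt : 1 < (Finset.univ.filter (fun i => v i ≠ 0)).card := by omega
      obtain ⟨a, ha, b, hb, hab⟩ := Finset.one_lt_card.1 hlt
      have hva : v a = 1 := (zmod2_cases (v a)).resolve_left (Finset.mem_filter.1 ha).2
      have hvb : v b = 1 := (zmod2_cases (v b)).resolve_left (Finset.mem_filter.1 hb).2
      set v' := fun i => v i + eab a b i with hv'
      have hv'a : v' a = 0 := by
        simp only [hv', eab, if_pos rfl, if_neg hab, add_zero, hva]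
        exact zmod2_add_self 1
      have hv'b : v' b = 0 := by
        simp only [hv', eab, if_pos rfl, if_neg (Ne.symm hab), zero_add, hvb]
        exact zmod2_add_self 1
      have hv'oth : ∀ i, i ≠ a → i ≠ b → v' i = v i := by
        intro i hia hib
        simp [hv', eab, hia, hib]
      have hfilt : Finset.univ.filter (fun i => v' i ≠ 0) =
          (Finset.univ.filter (fun i => v i ≠ 0)) \ {a, b} := by
        ext i
        simp only [Finset.mem_filter, Finset.mem_univ, true_and, Finset.mem_sdiff,
          Finset.mem_insert, Finset.mem_singleton]
        constructor
        · intro h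
          have hia : i ≠ a := fun e => h (e ▸ hv'a)
          have hib : i ≠ b := fun e => h (e ▸ hv'b)
          exact ⟨by rwa [hv'oth i hia hib] at h, fun e => e.elim hia hib⟩
        · rintro ⟨h1, h2⟩
          push_neg at h2
          rwa [hv'oth i h2.1 h2.2]
      have hcard : (Finset.univ.filter (fun i => v' i ≠ 0)).card = n - 2 := by
        rw [hfilt, Finset.card_sdiff_of_subset]
        · rw [hn, Finset.card_insert_of_notMem (by simp [hab]), Finset.card_singleton]
        · intro x hx
          simp only [Finset.mem_insert, Finset.mem_singleton] at hx
          rcases hx with rfl | rfl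
          · exact ha
          · exact hb
      have hsum' : ∑ i, v' i = 0 := by
        have : ∑ i, eab a b i = 0 := by
          simp only [eab, Finset.sum_add_distrib, Finset.sum_ite_eq', Finset.mem_univ,
            if_pos]
          exact zmod2_add_self 1
        simp only [hv', Finset.sum_add_distrib, hv, this, add_zero]
      obtain ⟨y1, hy1⟩ := ih (n - 2) (by omega) v' hsum' hcard
      obtain ⟨y2, hy2⟩ := eab_mem_of_reach (reach_of_conn hK hc a b)
      refine ⟨y1 + y2, ?_⟩
      rw [GZ_add, hy1, hy2]
      funext i
      simp only [hv', Pi.add_apply]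
      rw [add_assoc, zmod2_add_self, add_zero]

end Construction

section MainGen
variable {I : Type} [Fintype I] [DecidableEq I]

/-- the generating function -/
noncomputable def genF (K : Set (Set I)) : (EdgeT K → Bool) → (I → Bool) :=
  fun x i => decide (GZ K (fun j => if x j then 1 else 0) i = 1)

lemma genF_range (h2 : 2 ≤ Fintype.card I) {K : Set (Set I)} (hK : IsComplex K)
    (hc : ConnectedComplex K) : Set.range (genF K) = EvLang I := by
  classical
  apply Set.eq_of_subset_of_subset
  · rintro _ ⟨x, rfl⟩
    set y : EdgeT K → ZMod 2 := fun j => if x j then 1 else 0 with hy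
    have hcard : ((Finset.univ.filter (fun i => genF K x i = true)).card : ZMod 2) = 0 := by
      have h1 : (Finset.univ.filter (fun i => genF K x i = true)) =
          (Finset.univ.filter (fun i => GZ K y i = 1)) := by
        ext i; simp [genF, hy]
      have hterm : ∀ i : I, (if GZ K y i = 1 then (1 : ZMod 2) else 0) = GZ K y i := by
        intro i
        rcases zmod2_cases (GZ K y i) with h | h
        · rw [h, if_neg (by decide : ¬ (0 : ZMod 2) = 1)]
        · rw [h, if_pos rfl]
      rw [h1, ← Finset.sum_boole, Finset.sum_congr rfl (fun i _ => hterm i), GZ_total]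
    have hdvd : 2 ∣ (Finset.univ.filter (fun i => genF K x i = true)).card := by
      rwa [ZMod.natCast_eq_zero_iff] at hcard
    exact (even_iff_two_dvd).2 hdvd
  · intro v hv
    set vZ : I → ZMod 2 := fun i => if v i then 1 else 0 with hvZ
    have hsum : ∑ i, vZ i = 0 := by
      have : ∑ i, vZ i = ((Finset.univ.filter (fun i => v i = true)).card : ZMod 2) := by
        rw [← Finset.sum_boole]
        try exact Finset.sum_congr rfl (fun i _ => by by_cases h : v i <;> simp [hvZ, h])
      rw [this, ZMod.natCast_eq_zero_iff]
      exact (even_iff_two_dvd).1 hv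
    obtain ⟨y, hy⟩ := even_mem_range hK hc vZ hsum
    refine ⟨fun j => decide (y j = 1), ?_⟩
    have hyy : (fun j => if decide (y j = 1) = true then (1 : ZMod 2) else 0) = y := by
      funext j
      rcases zmod2_cases (y j) with h | h
      · rw [h]; simp [h]
      · rw [h]; simp [h]
    funext i
    simp only [genF, hyy, hy, hvZ]
    cases hvi : v i
    · rw [if_neg (by simp [hvi])]
      simp [(by decide : ¬ (0 : ZMod 2) = 1)]
    · rw [if_pos (by simp [hvi])]
      simp

lemma genF_comm {K : Set (Set I)} (hK : IsComplex K) : commComplex (genF K) ⊆ K := by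
  classical
  rintro S ⟨j, hj⟩
  simp only [Set.mem_iInter] at hj
  have hwin : ∀ i : I, window (genF K) i ⊆ {j' : EdgeT K | i = j'.1.1 ∨ i = j'.1.2} := by
    intro i
    apply window_subset
    intro x x' hagree
    have hGZ : GZ K (fun j => if x j then (1 : ZMod 2) else 0) i =
        GZ K (fun j => if x' j then (1 : ZMod 2) else 0) i := by
      simp only [GZ]
      apply Finset.sum_congr rfl
      intro j' _
      by_cases h : i = j'.1.1 ∨ i = j'.1.2
      · rw [hagree j' h]
      · simp only [wt, if_neg h, mul_zero]
    simp only [genF, hGZ]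
  have hsub : S ⊆ ({j.1.1, j.1.2} : Set I) := by
    intro i hi
    exact hwin i (hj i hi)
  exact hK _ j.2.2 _ hsub

lemma conn_to_gen (h2 : 2 ≤ Fintype.card I) {K : Set (Set I)} (hK : IsComplex K)
    (hc : ConnectedComplex K) : Generates K (EvLang I) := by
  classical
  have hI : Nonempty I := Fintype.card_pos_iff.1 (by omega)
  obtain ⟨i0⟩ := hI
  obtain ⟨b0, hb0, hK0⟩ := exists_edge h2 hK hc i0
  exact ⟨Bool, EdgeT K, inferInstance, inferInstance,
    ⟨⟨(i0, b0), Ne.symm hb0, hK0⟩⟩, genF K, genF_range h2 hK hc, genF_comm hK⟩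

end MainGen

section Trees
variable {I : Type} [Fintype I] [DecidableEq I]

lemma pair_set_eq {a b i j : I} (h : ({a, b} : Set I) = {i, j}) (hab : a ≠ b) :
    (a = i ∧ b = j) ∨ (a = j ∧ b = i) := by
  have ha : a ∈ ({i, j} : Set I) := h ▸ (by simp : a ∈ ({a, b} : Set I))
  have hb : b ∈ ({i, j} : Set I) := h ▸ (by simp : b ∈ ({a, b} : Set I))
  simp only [Set.mem_insert_iff, Set.mem_singleton_iff] at ha hb
  rcases ha with rfl | rfl
  · rcases hb with rfl | rfl
    · -- b = a contradiction? b = i = a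
      exact absurd rfl hab
    · exact Or.inl ⟨rfl, rfl⟩
  · rcases hb with rfl | rfl
    · exact Or.inr ⟨rfl, rfl⟩
    · exact absurd rfl hab

lemma gen_mem_basics {K : Set (Set I)} (h2 : 2 ≤ Fintype.card I)
    (hgen : Generates K (EvLang I)) : ∅ ∈ K ∧ ∀ i : I, ({i} : Set I) ∈ K := by
  obtain ⟨B, J, hB, hJ, hJne, f, hrange, hcomm⟩ := hgen
  constructor
  · apply hcomm
    have : (⋂ i ∈ (∅ : Set I), window f i) = Set.univ := by simp
    exact (by rw [commComplex, Set.mem_setOf_eq, this]; exact Set.univ_nonempty)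
  · intro i
    apply hcomm
    have hw : (window f i).Nonempty := by
      rw [Set.nonempty_iff_ne_empty]
      intro hemp
      obtain ⟨k, hk⟩ := Fintype.exists_ne_of_one_lt_card (by omega) i
      obtain ⟨x, hx⟩ : (fun _ => false) ∈ Set.range f := hrange ▸ zero_mem_ev
      obtain ⟨y, hy⟩ : (fun i' => decide (i' = i ∨ i' = k)) ∈ Set.range f :=
        hrange ▸ pair_mem_ev (Ne.symm hk)
      have := determines_window f i x y (by rw [hemp]; intro j hj; exact absurd hj (by simp))
      rw [hx, hy] at this
      simp at this
    have : (⋂ i' ∈ ({i} : Set I), window f i') = window f i := by simp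
    exact (by rw [commComplex, Set.mem_setOf_eq, this]; exact hw)

lemma isComplex_treeComplex (G : SimpleGraph I) : IsComplex (treeComplex G) := by
  intro S hS T hT
  rcases hS with rfl | ⟨i, rfl⟩ | ⟨i, j, hij, rfl⟩
  · left; exact Set.subset_empty_iff.1 hT
  · rcases Set.subset_singleton_iff_eq.1 hT with rfl | rfl
    · left; rfl
    · right; left; exact ⟨i, rfl⟩
  · by_cases hi : i ∈ T
    · by_cases hj : j ∈ T
      · right; right
        refine ⟨i, j, hij, ?_⟩
        apply Set.eq_of_subset_of_subset hT
        intro t ht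
        rcases ht with rfl | ht
        · exact hi
        · rcases ht with rfl; exact hj
      · right; left
        refine ⟨i, ?_⟩
        apply Set.eq_of_subset_of_subset
        · intro t ht
          rcases hT ht with rfl | h
          · rfl
          · rcases h with rfl; exact absurd ht hj
        · intro t ht; rcases ht with rfl; exact hi
    · by_cases hj : j ∈ T
      · right; left
        refine ⟨j, ?_⟩
        apply Set.eq_of_subset_of_subset
        · intro t ht
          rcases hT ht with rfl | h
          · exact absurd ht hi
          · rcases h with rfl; rfl
        · intro t ht; rcases ht with rfl; exact hj
      · left
        apply Set.eq_empty_of_forall_notMem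
        intro t ht
        rcases hT ht with rfl | h
        · exact hi ht
        · rcases h with rfl; exact hj ht

lemma cross_of_walk {G : SimpleGraph I} {I0 : Set I} :
    ∀ {a b : I}, G.Walk a b → a ∈ I0 → b ∉ I0 →
      ∃ u v, G.Adj u v ∧ u ∈ I0 ∧ v ∉ I0 := by
  intro a b w
  induction w with
  | nil => intro ha hb; exact absurd ha hb
  | @cons u v w hadj p ih =>
    intro ha hb
    by_cases hv : v ∈ I0
    · exact ih hv hb
    · exact ⟨u, v, hadj, ha, hv⟩

lemma connectedComplex_treeComplex {G : SimpleGraph I} (hG : G.Connected) :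
    ConnectedComplex (treeComplex G) := by
  rintro ⟨I0, hne, hnu, hsplit⟩
  obtain ⟨a, ha⟩ := Set.nonempty_iff_ne_empty.2 hne
  obtain ⟨b, hb⟩ : ∃ c, c ∉ I0 := by
    by_contra h; push_neg at h
    exact hnu (Set.eq_univ_of_forall h)
  obtain ⟨w⟩ := hG.preconnected a b
  obtain ⟨u, v, hadj, hu, hv⟩ := cross_of_walk w ha hb
  have hS : ({u, v} : Set I) ∈ treeComplex G := Or.inr (Or.inr ⟨u, v, hadj, rfl⟩)
  rcases hsplit _ hS with h | h
  · exact hv (h (by simp))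
  · exact (h (by simp) : u ∈ I0ᶜ) hu

lemma skel_adj {K : Set (Set I)} {a b : I} :
    (skeletonGraph K).Adj a b ↔ a ≠ b ∧ ({a, b} : Set I) ∈ K := by
  rw [skeletonGraph, SimpleGraph.fromRel_adj]
  constructor
  · rintro ⟨hne, h | h⟩
    · exact ⟨hne, h⟩
    · exact ⟨hne, Set.pair_comm b a ▸ h⟩
  · rintro ⟨hne, h⟩
    exact ⟨hne, Or.inl h⟩

lemma reach_delete_of_walk {G : SimpleGraph I} {a b : I}
    (h : (G \ SimpleGraph.fromEdgeSet {s(a, b)}).Reachable a b) :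
    ∀ {x y : I}, G.Walk x y → (G \ SimpleGraph.fromEdgeSet {s(a, b)}).Reachable x y := by
  intro x y w
  induction w with
  | nil => exact SimpleGraph.Reachable.refl _
  | @cons u v w hadj p ih =>
    refine SimpleGraph.Reachable.trans ?_ ih
    by_cases he : s(u, v) = s(a, b)
    · rcases Sym2.eq_iff.1 he with ⟨rfl, rfl⟩ | ⟨rfl, rfl⟩
      · exact h
      · exact h.symm
    · refine SimpleGraph.Adj.reachable ?_
      rw [SimpleGraph.sdiff_adj]
      refine ⟨hadj, ?_⟩
      rw [SimpleGraph.fromEdgeSet_adj]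
      rintro ⟨hmem, -⟩
      exact he (Set.mem_singleton_iff.1 hmem)

lemma treeComplex_mono {G G' : SimpleGraph I} (h : G ≤ G') :
    treeComplex G ⊆ treeComplex G' := by
  rintro S (rfl | ⟨i, rfl⟩ | ⟨i, j, hij, rfl⟩)
  · left; rfl
  · right; left; exact ⟨i, rfl⟩
  · right; right; exact ⟨i, j, h hij, rfl⟩

lemma tree_minimal (h2 : 2 ≤ Fintype.card I) {G : SimpleGraph I} (hT : G.IsTree)
    {K' : Set (Set I)} (hsub : K' ⊆ treeComplex G)
    (hgen : Generates K' (EvLang I)) : K' = treeComplex G := by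
  have hc := gen_to_conn h2 hgen
  obtain ⟨hemp, hsing⟩ := gen_mem_basics h2 hgen
  have hedge : ∀ a b : I, G.Adj a b → ({a, b} : Set I) ∈ K' := by
    intro a b hadj
    have hbridge : G.IsBridge s(a, b) :=
      (SimpleGraph.isAcyclic_iff_forall_adj_isBridge.1 hT.2) hadj
    rw [SimpleGraph.isBridge_iff] at hbridge
    by_contra habK
    set G' := G \ SimpleGraph.fromEdgeSet {s(a, b)} with hG'
    set I0 := {c : I | G'.Reachable a c} with hI0
    refine hc ⟨I0, ?_, ?_, ?_⟩
    · exact Set.nonempty_iff_ne_empty.1 ⟨a, SimpleGraph.Reachable.refl a⟩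
    · intro hu
      exact hbridge (hu ▸ Set.mem_univ b : b ∈ I0)
    · intro S hS
      rcases hsub hS with rfl | ⟨i, rfl⟩ | ⟨i, j, hij, rfl⟩
      · left; exact Set.empty_subset _
      · by_cases hi : i ∈ I0
        · left; intro t ht; rcases ht with rfl; exact hi
        · right; intro t ht; rcases ht with rfl; exact hi
      · by_cases hpair : ({i, j} : Set I) = ({a, b} : Set I)
        · exact absurd (hpair ▸ hS) habK
        · have hne : s(i, j) ≠ s(a, b) := by
            intro he
            rcases Sym2.eq_iff.1 he with ⟨rfl, rfl⟩ | ⟨rfl, rfl⟩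
            · exact hpair rfl
            · exact hpair (Set.pair_comm i j)
          have hadj' : G'.Adj i j := by
            rw [hG', SimpleGraph.sdiff_adj]
            refine ⟨hij, ?_⟩
            rw [SimpleGraph.fromEdgeSet_adj]
            rintro ⟨hmem, -⟩
            exact hne (Set.mem_singleton_iff.1 hmem)
          by_cases hi : i ∈ I0
          · left
            intro t ht
            rcases ht with rfl | ht
            · exact hi
            · rcases ht with rfl
              exact SimpleGraph.Reachable.trans hi hadj'.reachable
          · right
            intro t ht
            rcases ht with rfl | ht
            · exact hi
            · rcases ht with rfl
              intro hj
              exact hi (SimpleGraph.Reachable.trans hj hadj'.symm.reachable)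
  apply Set.eq_of_subset_of_subset hsub
  rintro S (rfl | ⟨i, rfl⟩ | ⟨i, j, hij, rfl⟩)
  · exact hemp
  · exact hsing i
  · exact hedge i j hij

end Trees

section Final
variable {I : Type} [Fintype I] [DecidableEq I]

lemma rtg_to_reach {K : Set (Set I)} {a b : I}
    (h : Relation.ReflTransGen (fun x y => x ≠ y ∧ ({x, y} : Set I) ∈ K) a b) :
    (skeletonGraph K).Reachable a b := by
  induction h with
  | refl => exact SimpleGraph.Reachable.refl a
  | tail _ hstep ih => exact ih.trans (SimpleGraph.Adj.reachable (skel_adj.2 hstep))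

lemma skel_connected (h2 : 2 ≤ Fintype.card I) {K : Set (Set I)} (hK : IsComplex K)
    (hc : ConnectedComplex K) : (skeletonGraph K).Connected := by
  have hI : Nonempty I := Fintype.card_pos_iff.1 (by omega)
  rw [SimpleGraph.connected_iff]
  exact ⟨fun a b => rtg_to_reach (reach_of_conn hK hc a b), hI⟩

theorem stmt13' (h2 : 2 ≤ Fintype.card I)
    (K : Set (Set I)) (hK : IsComplex K) :
    (Generates K (EvLang I) ↔ ConnectedComplex K) ∧
    ((Generates K (EvLang I) ∧ ∀ K' ⊆ K, Generates K' (EvLang I) → K' = K) ↔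
      ∃ G : SimpleGraph I, G.IsTree ∧ K = treeComplex G) := by
  constructor
  · exact ⟨fun h => gen_to_conn h2 h, fun h => conn_to_gen h2 hK h⟩
  constructor
  · rintro ⟨hgen, hmin⟩
    have hc := gen_to_conn h2 hgen
    set G := skeletonGraph K with hG
    have hGconn : G.Connected := skel_connected h2 hK hc
    have hGsub : treeComplex G ⊆ K := by
      rintro S (rfl | ⟨i, rfl⟩ | ⟨i, j, hij, rfl⟩)
      · obtain ⟨i0⟩ : Nonempty I := Fintype.card_pos_iff.1 (by omega)
        obtain ⟨b, hb, hKb⟩ := exists_edge h2 hK hc i0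
        exact hK _ hKb _ (Set.empty_subset _)
      · obtain ⟨b, hb, hKb⟩ := exists_edge h2 hK hc i
        exact hK _ hKb _ (by intro t ht; rcases ht with rfl; simp)
      · exact (skel_adj.1 hij).2
    have hGgen : Generates (treeComplex G) (EvLang I) :=
      conn_to_gen h2 (isComplex_treeComplex G) (connectedComplex_treeComplex hGconn)
    have hKeq : treeComplex G = K := hmin _ hGsub hGgen
    refine ⟨G, ⟨hGconn, ?_⟩, hKeq.symm⟩
    rw [SimpleGraph.isAcyclic_iff_forall_adj_isBridge]
    intro a b hadj
    rw [SimpleGraph.isBridge_iff]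
    refine fun hreach => ?_
    set G' := G \ SimpleGraph.fromEdgeSet {s(a, b)} with hG'
    have hG'le : G' ≤ G := sdiff_le
    have hG'conn : G'.Connected := by
      rw [SimpleGraph.connected_iff]
      refine ⟨fun x y => ?_, hGconn.nonempty⟩
      obtain ⟨w⟩ := hGconn.preconnected x y
      exact reach_delete_of_walk hreach w
    have hG'sub : treeComplex G' ⊆ K := (treeComplex_mono hG'le).trans hGsub
    have hG'gen : Generates (treeComplex G') (EvLang I) :=
      conn_to_gen h2 (isComplex_treeComplex G') (connectedComplex_treeComplex hG'conn)
    have hKeq' : treeComplex G' = K := hmin _ hG'sub hG'gen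
    have hnadj : ¬ G'.Adj a b := by
      rw [hG', SimpleGraph.sdiff_adj]
      rintro ⟨-, hne⟩
      exact hne (by rw [SimpleGraph.fromEdgeSet_adj]; exact ⟨rfl, hadj.ne⟩)
    have habK : ({a, b} : Set I) ∈ treeComplex G' := by
      rw [hKeq']
      exact (skel_adj.1 hadj).2
    rcases habK with h0 | ⟨i, hi⟩ | ⟨i, j, hij, hij2⟩
    · exact absurd (h0 ▸ (by simp : a ∈ ({a, b} : Set I))) (Set.notMem_empty a)
    · have ha : a = i := by
        have : a ∈ ({i} : Set I) := hi ▸ (by simp : a ∈ ({a, b} : Set I))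
        simpa using this
      have hb : b = i := by
        have : b ∈ ({i} : Set I) := hi ▸ (by simp : b ∈ ({a, b} : Set I))
        simpa using this
      exact hadj.ne (ha.trans hb.symm)
    · rcases pair_set_eq hij2 hadj.ne with ⟨rfl, rfl⟩ | ⟨rfl, rfl⟩
      · exact hnadj hij
      · exact hnadj hij.symm
  · rintro ⟨G, hT, rfl⟩
    exact ⟨conn_to_gen h2 (isComplex_treeComplex G) (connectedComplex_treeComplex hT.1),
      fun K' hsub hgen' => tree_minimal h2 hT hsub hgen'⟩

end Final

/-- a simplicial complex generates `Ev_I` iff it is connected;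
consequently the minimal complexes generating `Ev_I` are exactly the spanning
trees of `I`. -/
theorem stmt13 {I : Type} [Fintype I] [DecidableEq I] (h2 : 2 ≤ Fintype.card I)
    (K : Set (Set I)) (hK : IsComplex K) :
    (Generates K (EvLang I) ↔ ConnectedComplex K) ∧
    ((Generates K (EvLang I) ∧ ∀ K' ⊆ K, Generates K' (EvLang I) → K' = K) ↔
      ∃ G : SimpleGraph I, G.IsTree ∧ K = treeComplex G) := by
  exact stmt13' h2 K hK
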